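/- The polynomial p(A) = −A⁴ + A³ + 2A² − 2A + 4 has all its roots of modulus strictly greater than 1. -/

import Mathlib

theorem stmt2 (z : ℂ) (hz : -z ^ 4 + z ^ 3 + 2 * z ^ 2 - 2 * z + 4 = 0) :
    1 < ‖z‖ := by
  by_contra hle
  push_neg at hle
  have hfac : (z - 2) * (z ^ 3 + z ^ 2 + 2) = 0 := by linear_combination -hz
  rcases mul_eq_zero.mp hfac with h2 | h3
  · have hz2 : z = 2 := by linear_combination h2
    rw [hz2] at hle
    simp [Complex.norm_two] at hle
  · have key : z ^ 2 * (z + 1) = -2 := by linear_combination h3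
    have habs : ‖z‖ ^ 2 * ‖z + 1‖ = 2 := by
      have := congrArg (‖·‖) key
      rwa [norm_mul, norm_pow, norm_neg, Complex.norm_two] at this
    set a := ‖z‖ with ha
    set b := ‖z + 1‖ with hb
    have ha0 : 0 ≤ a := norm_nonneg z
    have hb0 : 0 ≤ b := norm_nonneg (z + 1)
    have htri : b ≤ a + 1 := by
      have := norm_add_le z 1
      simpa using this
    have ha1 : a = 1 := by nlinarith [sq_nonneg (a - 1), sq_nonneg a]
    have hb2 : b = 2 := by
      rw [ha1] at habs; linarith [habs]
    -- from a = 1 and b = 2, deduce z = 1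
    have hsq : z.re * z.re + z.im * z.im = 1 := by
      have := Complex.sq_norm z
      rw [← ha, ha1] at this
      rw [Complex.normSq_apply] at this
      linarith [this]
    have hsq2 : (z.re + 1) * (z.re + 1) + z.im * z.im = 4 := by
      have := Complex.sq_norm (z + 1)
      rw [← hb, hb2] at this
      rw [Complex.normSq_apply] at this
      simp only [Complex.add_re, Complex.add_im, Complex.one_re, Complex.one_im,
        add_zero] at this
      linarith [this]
    have hre : z.re = 1 := by nlinarith
    have him : z.im = 0 := by nlinarith
    have hz1 : z = 1 := by
      apply Complex.ext <;> simp [hre, him]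
    rw [hz1] at h3
    norm_num at h3
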